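/- Let λ > 0, m ≥ 2 the smallest integer with α(m) > 0, and suppose ∑_{k≥m} (α(k)/k!)(k−1) < ∞. Define φ(y) = (1/(1−y))·∑_{k≥m} (α(k)/k!)(k−1)·y^k for y ∈ [0,1). Then for each λ > 0 there is a unique y_λ ∈ (0,1) with φ(y_λ) = λ, and y_λ = λ^{1/m}·(m!/((m−1)·α(m)))^{1/m} + o(λ^{1/m}) as λ → 0. -/

import Mathlib

open Filter Asymptotics

/-- The stationarity condition at `x = 1`:
`φ(y) = (1/(1−y)) ∑_{k≥m} (α(k)/k!)(k−1) y^k` (index shifted: `k = j + m`). -/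
noncomputable def statPhi (α : ℕ → ℝ) (m : ℕ) (y : ℝ) : ℝ :=
  (1 - y)⁻¹ * ∑' j : ℕ,
    α (j + m) / (Nat.factorial (j + m) : ℝ) * ((j : ℝ) + m - 1) * y ^ (j + m)

namespace StatAux

noncomputable def c (α : ℕ → ℝ) (m : ℕ) (j : ℕ) : ℝ :=
  α (j + m) / (Nat.factorial (j + m) : ℝ) * ((j : ℝ) + m - 1)

lemma statPhi_eq (α : ℕ → ℝ) (m : ℕ) (y : ℝ) :
    statPhi α m y = (1 - y)⁻¹ * ∑' j : ℕ, c α m j * y ^ (j + m) := rfl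

noncomputable def f (α : ℕ → ℝ) (m : ℕ) (y : ℝ) : ℝ := ∑' j : ℕ, c α m j * y ^ (j + m)

noncomputable def g (α : ℕ → ℝ) (m : ℕ) (y : ℝ) : ℝ := ∑' j : ℕ, c α m j * y ^ j

variable {α : ℕ → ℝ} {m : ℕ}

lemma c_nonneg (hα0 : ∀ k, 0 ≤ α k) (hm : 2 ≤ m) (j : ℕ) : 0 ≤ c α m j := by
  have h2 : (2:ℝ) ≤ (m:ℝ) := by exact_mod_cast hm
  have h3 : (0:ℝ) ≤ (j:ℝ) := Nat.cast_nonneg j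
  have h1 : (0:ℝ) ≤ (j : ℝ) + m - 1 := by linarith
  exact mul_nonneg (div_nonneg (hα0 _) (Nat.cast_nonneg _)) h1

lemma c0_pos (hm : 2 ≤ m) (hαm : 0 < α m) : 0 < c α m 0 := by
  have h2 : (2:ℝ) ≤ (m:ℝ) := by exact_mod_cast hm
  have h1 : (0:ℝ) < ((0:ℕ) : ℝ) + m - 1 := by push_cast; linarith
  have h2' : (0:ℝ) < α (0 + m) / (Nat.factorial (0 + m) : ℝ) := by
    apply div_pos
    · simpa using hαm
    · exact_mod_cast Nat.factorial_pos _
  exact mul_pos h2' h1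

lemma summable_f (hα0 : ∀ k, 0 ≤ α k) (hm : 2 ≤ m) (hsum : Summable (c α m))
    {y : ℝ} (h0 : 0 ≤ y) (h1 : y ≤ 1) :
    Summable (fun j => c α m j * y ^ (j + m)) := by
  apply Summable.of_nonneg_of_le _ _ hsum
  · intro j; exact mul_nonneg (c_nonneg hα0 hm j) (pow_nonneg h0 _)
  · intro j
    calc c α m j * y ^ (j + m) ≤ c α m j * 1 := by
          apply mul_le_mul_of_nonneg_left _ (c_nonneg hα0 hm j)
          exact pow_le_one₀ h0 h1
      _ = c α m j := mul_one _

lemma summable_g (hα0 : ∀ k, 0 ≤ α k) (hm : 2 ≤ m) (hsum : Summable (c α m))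
    {y : ℝ} (h0 : 0 ≤ y) (h1 : y ≤ 1) :
    Summable (fun j => c α m j * y ^ j) := by
  apply Summable.of_nonneg_of_le _ _ hsum
  · intro j; exact mul_nonneg (c_nonneg hα0 hm j) (pow_nonneg h0 _)
  · intro j
    calc c α m j * y ^ j ≤ c α m j * 1 := by
          apply mul_le_mul_of_nonneg_left _ (c_nonneg hα0 hm j)
          exact pow_le_one₀ h0 h1
      _ = c α m j := mul_one _

lemma f_eq_g_mul (y : ℝ) : f α m y = g α m y * y ^ m := by
  rw [f, g, ← tsum_mul_right]
  congr 1; funext j; rw [pow_add, mul_assoc]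

lemma f_zero (hm : 2 ≤ m) : f α m 0 = 0 := by
  rw [f]
  convert tsum_zero with j
  rw [zero_pow (by omega : j + m ≠ 0), mul_zero]

lemma g_zero : g α m 0 = c α m 0 := by
  rw [g, tsum_eq_single 0]
  · simp
  · intro j hj; rw [zero_pow hj, mul_zero]

lemma f_lower (hα0 : ∀ k, 0 ≤ α k) (hm : 2 ≤ m) (hsum : Summable (c α m))
    {y : ℝ} (h0 : 0 ≤ y) (h1 : y ≤ 1) : c α m 0 * y ^ m ≤ f α m y := by
  have := Summable.le_tsum (summable_f hα0 hm hsum h0 h1) 0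
    (fun j _ => mul_nonneg (c_nonneg hα0 hm j) (pow_nonneg h0 _))
  simpa [f] using this

lemma g_lower (hα0 : ∀ k, 0 ≤ α k) (hm : 2 ≤ m) (hsum : Summable (c α m))
    {y : ℝ} (h0 : 0 ≤ y) (h1 : y ≤ 1) : c α m 0 ≤ g α m y := by
  have := Summable.le_tsum (summable_g hα0 hm hsum h0 h1) 0
    (fun j _ => mul_nonneg (c_nonneg hα0 hm j) (pow_nonneg h0 _))
  simpa [g] using this

lemma f_nonneg (hα0 : ∀ k, 0 ≤ α k) (hm : 2 ≤ m) (hsum : Summable (c α m))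
    {y : ℝ} (h0 : 0 ≤ y) (h1 : y ≤ 1) : 0 ≤ f α m y :=
  le_trans (mul_nonneg (c_nonneg hα0 hm 0) (pow_nonneg h0 _)) (f_lower hα0 hm hsum h0 h1)

lemma f_strictMono (hα0 : ∀ k, 0 ≤ α k) (hm : 2 ≤ m) (hαm : 0 < α m)
    (hsum : Summable (c α m)) {a b : ℝ} (ha : 0 ≤ a) (hab : a < b) (hb : b ≤ 1) :
    f α m a < f α m b := by
  apply Summable.tsum_lt_tsum_of_nonneg (i := 0)
  · intro j; exact mul_nonneg (c_nonneg hα0 hm j) (pow_nonneg ha _)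
  · intro j
    exact mul_le_mul_of_nonneg_left (pow_le_pow_left₀ ha hab.le _) (c_nonneg hα0 hm j)
  · have : a ^ (0 + m) < b ^ (0 + m) := pow_lt_pow_left₀ hab ha (by omega)
    exact mul_lt_mul_of_pos_left this (c0_pos hm hαm)
  · exact summable_f hα0 hm hsum (ha.trans hab.le) hb

lemma phi_strictMono (hα0 : ∀ k, 0 ≤ α k) (hm : 2 ≤ m) (hαm : 0 < α m)
    (hsum : Summable (c α m)) {a b : ℝ} (ha : 0 ≤ a) (hab : a < b) (hb : b < 1) :
    statPhi α m a < statPhi α m b := by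
  rw [statPhi_eq, statPhi_eq]
  have hfa : f α m a < f α m b := f_strictMono hα0 hm hαm hsum ha hab hb.le
  have hfa0 : 0 ≤ f α m a := f_nonneg hα0 hm hsum ha (hab.le.trans hb.le)
  have h1a : 0 < (1 - a)⁻¹ := by
    apply inv_pos.2; linarith
  have h1b : (1 - a)⁻¹ ≤ (1 - b)⁻¹ := by
    apply inv_anti₀ (by linarith) (by linarith)
  show (1 - a)⁻¹ * f α m a < (1 - b)⁻¹ * f α m b
  calc (1 - a)⁻¹ * f α m a < (1 - a)⁻¹ * f α m b :=
        mul_lt_mul_of_pos_left hfa h1a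
    _ ≤ (1 - b)⁻¹ * f α m b := mul_le_mul_of_nonneg_right h1b (by linarith)

lemma phi_zero (hm : 2 ≤ m) : statPhi α m 0 = 0 := by
  rw [statPhi_eq]
  have h : ∀ j : ℕ, c α m j * (0:ℝ) ^ (j + m) = 0 := fun j => by
    rw [zero_pow (by omega), mul_zero]
  simp only [h, tsum_zero, mul_zero]

lemma phi_continuousOn (hα0 : ∀ k, 0 ≤ α k) (hm : 2 ≤ m) (hsum : Summable (c α m))
    {r : ℝ} (hr : r < 1) :
    ContinuousOn (statPhi α m) (Set.Icc 0 r) := by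
  have hc : ContinuousOn (fun y : ℝ => ∑' j : ℕ, c α m j * y ^ (j + m)) (Set.Icc 0 r) := by
    apply continuousOn_tsum (u := c α m)
    · intro j; exact (continuous_const.mul (continuous_pow _)).continuousOn
    · exact hsum
    · intro j y hy
      rw [Real.norm_eq_abs, abs_mul, abs_of_nonneg (c_nonneg hα0 hm j), abs_pow]
      calc c α m j * |y| ^ (j + m) ≤ c α m j * 1 := by
            apply mul_le_mul_of_nonneg_left _ (c_nonneg hα0 hm j)
            apply pow_le_one₀ (abs_nonneg _)
            rw [abs_le]; exact ⟨by linarith [hy.1], by linarith [hy.2]⟩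
        _ = c α m j := mul_one _
  apply ContinuousOn.mul _ hc
  apply ContinuousOn.inv₀ (continuous_const.sub continuous_id).continuousOn
  intro y hy
  have := hy.2
  intro h
  have : (1:ℝ) - y = 0 := h
  linarith


lemma g_contOn (hα0 : ∀ k, 0 ≤ α k) (hm : 2 ≤ m) (hsum : Summable (c α m)) :
    ContinuousOn (g α m) (Set.Icc (0:ℝ) (1/2)) := by
  apply continuousOn_tsum (u := c α m)
  · intro j; exact (continuous_const.mul (continuous_pow _)).continuousOn
  · exact hsum
  · intro j y hy
    rw [Real.norm_eq_abs, abs_mul, abs_of_nonneg (c_nonneg hα0 hm j), abs_pow]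
    calc c α m j * |y| ^ j ≤ c α m j * 1 := by
          apply mul_le_mul_of_nonneg_left _ (c_nonneg hα0 hm j)
          apply pow_le_one₀ (abs_nonneg _)
          rw [abs_le]; exact ⟨by linarith [hy.1], by linarith [hy.2]⟩
      _ = c α m j := mul_one _

lemma exists_root (hα0 : ∀ k, 0 ≤ α k) (hm : 2 ≤ m) (hαm : 0 < α m)
    (hsum : Summable (c α m)) {lam : ℝ} (hlam : 0 < lam) :
    ∃ y ∈ Set.Ioo (0:ℝ) 1, statPhi α m y = lam := by
  set c0 := c α m 0 with hc0
  have hc0pos : 0 < c0 := c0_pos hm hαm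
  set r : ℝ := max (1/2) (1 - c0 / (2^m * lam)) with hrdef
  have hr1 : r < 1 := by
    apply max_lt (by norm_num)
    have : 0 < c0 / (2^m * lam) := by positivity
    linarith
  have hrhalf : (1/2 : ℝ) ≤ r := le_max_left _ _
  have hr0 : (0:ℝ) ≤ r := by linarith
  have hlow : lam ≤ statPhi α m r := by
    have h1r : 0 < 1 - r := by linarith
    have hfl : c0 * r^m ≤ f α m r := f_lower hα0 hm hsum hr0 hr1.le
    have key : lam * (1 - r) ≤ c0 * r^m := by
      have h1 : 1 - r ≤ c0 / (2^m * lam) := by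
        have := le_max_right (1/2:ℝ) (1 - c0/(2^m*lam)); linarith
      have h2 : (1/2:ℝ)^m ≤ r^m := pow_le_pow_left₀ (by norm_num) hrhalf m
      have h3 : lam * (1 - r) ≤ lam * (c0 / (2^m * lam)) :=
        mul_le_mul_of_nonneg_left h1 hlam.le
      have h4 : lam * (c0 / (2^m*lam)) = c0 * (1/2)^m := by
        field_simp; rw [← mul_pow]; norm_num
      have h6 : c0 * (1/2)^m ≤ c0 * r^m := mul_le_mul_of_nonneg_left h2 hc0pos.le
      linarith
    have hkey2 : lam * (1-r) ≤ f α m r := key.trans hfl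
    rw [statPhi_eq]
    have hstep := mul_le_mul_of_nonneg_left hkey2 (inv_pos.2 h1r).le
    calc lam = (1-r)⁻¹ * (lam * (1-r)) := by field_simp
      _ ≤ (1-r)⁻¹ * f α m r := hstep
      _ = (1-r)⁻¹ * ∑' j : ℕ, c α m j * r ^ (j + m) := by rw [f]
  have hcont := phi_continuousOn hα0 hm hsum hr1
  have h0 : statPhi α m 0 = 0 := phi_zero hm
  have hmem : lam ∈ Set.Icc (statPhi α m 0) (statPhi α m r) :=
    ⟨by rw [h0]; exact hlam.le, hlow⟩
  obtain ⟨y, hy, hyl⟩ := intermediate_value_Icc hr0 hcont hmem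
  refine ⟨y, ⟨?_, lt_of_le_of_lt hy.2 hr1⟩, hyl⟩
  rcases eq_or_lt_of_le hy.1 with h | h
  · exfalso; rw [← h, h0] at hyl; linarith
  · exact h

end StatAux


open StatAux

/-- For each `λ > 0` there is a unique `y_λ ∈ (0,1)` with `φ(y_λ) = λ`, and
`y_λ = λ^{1/m}(m!/((m−1)α(m)))^{1/m}` as `λ → 0⁺`. -/
theorem stationary_total_density_asymptotics (α : ℕ → ℝ) (hα0 : ∀ k, 0 ≤ α k)
    (m : ℕ) (hm : 2 ≤ m) (hαm : 0 < α m) (hmin : ∀ k < m, α k = 0)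
    (hsum : Summable (fun j : ℕ =>
      α (j + m) / (Nat.factorial (j + m) : ℝ) * ((j : ℝ) + m - 1))) :
    ∃ Y : ℝ → ℝ,
      (∀ lam : ℝ, 0 < lam →
        Y lam ∈ Set.Ioo (0 : ℝ) 1 ∧ statPhi α m (Y lam) = lam ∧
          ∀ y ∈ Set.Ioo (0 : ℝ) 1, statPhi α m y = lam → y = Y lam) ∧
      (fun lam : ℝ => Y lam -
          lam ^ ((1 : ℝ) / m) *
            ((Nat.factorial m : ℝ) / (((m : ℝ) - 1) * α m)) ^ ((1 : ℝ) / m))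
        =o[nhdsWithin 0 (Set.Ioi 0)] fun lam : ℝ => lam ^ ((1 : ℝ) / m) := by
  classical
  have hsum' : Summable (c α m) := hsum
  set Y : ℝ → ℝ := fun lam =>
    if h : 0 < lam then (exists_root hα0 hm hαm hsum' h).choose else 0 with hYdef
  have hYspec : ∀ lam : ℝ, 0 < lam →
      Y lam ∈ Set.Ioo (0:ℝ) 1 ∧ statPhi α m (Y lam) = lam := by
    intro lam h
    simp only [hYdef, dif_pos h]
    obtain ⟨h1, h2⟩ := (exists_root hα0 hm hαm hsum' h).choose_spec
    exact ⟨h1, h2⟩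
  have huniq : ∀ {a b : ℝ}, a ∈ Set.Ico (0:ℝ) 1 → b ∈ Set.Ico (0:ℝ) 1 →
      statPhi α m a = statPhi α m b → a = b := by
    intro a b ha hb hab
    rcases lt_trichotomy a b with h | h | h
    · exact absurd hab (ne_of_lt (phi_strictMono hα0 hm hαm hsum' ha.1 h hb.2))
    · exact h
    · exact absurd hab.symm (ne_of_lt (phi_strictMono hα0 hm hαm hsum' hb.1 h ha.2))
  refine ⟨Y, fun lam hlam => ⟨(hYspec lam hlam).1, (hYspec lam hlam).2,
    fun y hy hyl => huniq ⟨hy.1.le, hy.2⟩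
      ⟨(hYspec lam hlam).1.1.le, (hYspec lam hlam).1.2⟩
      (hyl.trans (hYspec lam hlam).2.symm)⟩, ?_⟩
  -- asymptotics
  set c0 := c α m 0 with hc0def
  have hc0pos : 0 < c0 := c0_pos hm hαm
  have hm0 : (m:ℝ) ≠ 0 := by positivity
  -- ` Y lam < ε ` eventually, for every ε > 0
  have hsmall : ∀ ε : ℝ, 0 < ε → ∀ᶠ lam in nhdsWithin 0 (Set.Ioi 0), Y lam < ε := by
    intro ε hε
    set ε' : ℝ := min ε (1/2) with hε'def
    have hε'pos : 0 < ε' := lt_min hε (by norm_num)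
    have hε'lt1 : ε' < 1 := lt_of_le_of_lt (min_le_right _ _) (by norm_num)
    have hφε' : 0 < statPhi α m ε' := by
      have := phi_strictMono hα0 hm hαm hsum' (le_refl 0) hε'pos hε'lt1
      rwa [phi_zero hm] at this
    filter_upwards [Ioo_mem_nhdsGT_of_mem (Set.mem_Ico.2 ⟨le_refl (0:ℝ), hφε'⟩)]
      with lam hlam
    have hlam0 : 0 < lam := hlam.1
    obtain ⟨hY1, hY2⟩ := hYspec lam hlam0
    by_contra hcon
    push_neg at hcon
    have hcon' : ε' ≤ Y lam := le_trans (min_le_left _ _) hcon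
    rcases eq_or_lt_of_le hcon' with h | h
    · rw [← h] at hY2
      exact absurd (hY2 ▸ hlam.2) (lt_irrefl _)
    · have := phi_strictMono hα0 hm hαm hsum' hε'pos.le h hY1.2
      rw [hY2] at this
      linarith [hlam.2]
  have hYpos : ∀ᶠ lam in nhdsWithin 0 (Set.Ioi 0), 0 < Y lam := by
    filter_upwards [self_mem_nhdsWithin] with lam hlam
    exact (hYspec lam hlam).1.1
  have hYtendsto : Filter.Tendsto Y (nhdsWithin 0 (Set.Ioi 0))
      (nhdsWithin 0 (Set.Icc (0:ℝ) (1/2))) := by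
    rw [tendsto_nhdsWithin_iff]
    constructor
    · rw [tendsto_order]
      constructor
      · intro a ha
        filter_upwards [hYpos] with lam h
        linarith
      · intro a ha
        exact hsmall a ha
    · filter_upwards [hYpos, hsmall (1/2) (by norm_num)] with lam h1 h2
      exact ⟨h1.le, h2.le⟩
  -- the function H y = (1-y)⁻¹ * g y
  set H : ℝ → ℝ := fun y => (1 - y)⁻¹ * g α m y with hHdef
  have hHcont : ContinuousWithinAt H (Set.Icc (0:ℝ) (1/2)) 0 := by
    apply ContinuousOn.continuousWithinAt _ (Set.mem_Icc.2 ⟨le_refl 0, by norm_num⟩)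
    apply ContinuousOn.mul _ (g_contOn hα0 hm hsum')
    apply ContinuousOn.inv₀ (continuous_const.sub continuous_id).continuousOn
    intro y hy
    intro h
    have : (1:ℝ) - y = 0 := h
    have := hy.2
    norm_num at this ⊢
    linarith
  have hH0 : H 0 = c0 := by
    simp only [hHdef, sub_zero, inv_one, one_mul, g_zero, hc0def]
  have hHtendsto : Filter.Tendsto (fun lam => H (Y lam)) (nhdsWithin 0 (Set.Ioi 0))
      (nhds c0) := by
    rw [← hH0]
    exact (hHcont.tendsto).comp hYtendsto
  -- key identity
  have hkey : ∀ lam : ℝ, 0 < lam → lam = H (Y lam) * (Y lam) ^ m := by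
    intro lam hlam
    obtain ⟨hY1, hY2⟩ := hYspec lam hlam
    have hid : statPhi α m (Y lam) = H (Y lam) * (Y lam) ^ m := by
      rw [statPhi_eq]
      simp only [hHdef]
      rw [mul_assoc, ← f_eq_g_mul]
      rfl
    exact hY2.symm.trans hid
  have hHpos : ∀ lam : ℝ, 0 < lam → 0 < H (Y lam) := by
    intro lam hlam
    obtain ⟨hY1, _⟩ := hYspec lam hlam
    apply mul_pos (inv_pos.2 (by linarith [hY1.2]))
    exact lt_of_lt_of_le hc0pos (g_lower hα0 hm hsum' hY1.1.le hY1.2.le)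
  -- Tendsto (Y lam)^m / lam → c0⁻¹
  have hratio : Filter.Tendsto (fun lam => (Y lam) ^ m / lam) (nhdsWithin 0 (Set.Ioi 0))
      (nhds c0⁻¹) := by
    apply Filter.Tendsto.congr' _ (hHtendsto.inv₀ hc0pos.ne')
    filter_upwards [hYpos, self_mem_nhdsWithin] with lam hY hlam
    have hlam0 : (0:ℝ) < lam := hlam
    have hk := hkey lam hlam0
    have hH := hHpos lam hlam0
    rw [eq_comm, div_eq_iff hlam0.ne']
    calc Y lam ^ m = (H (Y lam))⁻¹ * (H (Y lam) * Y lam ^ m) := by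
          rw [← mul_assoc, inv_mul_cancel₀ hH.ne', one_mul]
      _ = (H (Y lam))⁻¹ * lam := by rw [← hk]
  -- Tendsto Y lam / lam^(1/m) → K0 := (c0⁻¹)^(1/m)
  set K0 : ℝ := (c0⁻¹) ^ ((1:ℝ)/m) with hK0def
  have hmain : Filter.Tendsto (fun lam => Y lam / lam ^ ((1:ℝ)/m))
      (nhdsWithin 0 (Set.Ioi 0)) (nhds K0) := by
    have h1 : Filter.Tendsto (fun lam => ((Y lam) ^ m / lam) ^ ((1:ℝ)/m))
        (nhdsWithin 0 (Set.Ioi 0)) (nhds K0) := by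
      apply Filter.Tendsto.rpow_const hratio
      right; positivity
    apply Filter.Tendsto.congr' _ h1
    filter_upwards [hYpos, self_mem_nhdsWithin] with lam hY hlam
    have hlam0 : (0:ℝ) < lam := hlam
    rw [Real.div_rpow (pow_nonneg hY.le m) hlam0.le]
    congr 1
    rw [← Real.rpow_natCast (Y lam) m, ← Real.rpow_mul hY.le]
    rw [mul_one_div, div_self hm0, Real.rpow_one]
  -- identify the constant
  have hKeq : K0 = ((Nat.factorial m : ℝ) / (((m : ℝ) - 1) * α m)) ^ ((1:ℝ)/m) := by
    rw [hK0def]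
    congr 1
    have hfact : (Nat.factorial m : ℝ) ≠ 0 := by
      exact_mod_cast (Nat.factorial_pos m).ne'
    have hm1 : ((m:ℝ) - 1) ≠ 0 := by
      have : (2:ℝ) ≤ (m:ℝ) := by exact_mod_cast hm
      linarith
    rw [hc0def]
    show (α (0 + m) / (Nat.factorial (0 + m) : ℝ) * (((0:ℕ):ℝ) + m - 1))⁻¹ = _
    simp only [Nat.zero_add, Nat.cast_zero, zero_add]
    rw [div_mul_eq_mul_div, inv_div, mul_comm (α m)]
  -- conclude
  rw [isLittleO_iff_tendsto']
  · have h2 : Filter.Tendsto (fun lam => Y lam / lam ^ ((1:ℝ)/m) - K0)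
        (nhdsWithin 0 (Set.Ioi 0)) (nhds 0) := by
      have := hmain.sub_const K0
      rwa [sub_self] at this
    apply Filter.Tendsto.congr' _ h2
    filter_upwards [self_mem_nhdsWithin] with lam hlam
    have hlam0 : (0:ℝ) < lam := hlam
    have hp : (0:ℝ) < lam ^ ((1:ℝ)/m) := Real.rpow_pos_of_pos hlam0 _
    rw [← hKeq, sub_div, mul_comm, mul_div_assoc, div_self hp.ne', mul_one]
  · filter_upwards [self_mem_nhdsWithin] with lam hlam
    have hlam0 : (0:ℝ) < lam := hlam
    intro h
    exact absurd h (Real.rpow_pos_of_pos hlam0 _).ne'
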